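/- Let x0 ≥ 1 and f : [x0, ∞) → ℝ be twice continuously differentiable with f, f', f'' > 0, and suppose that for all x0 ≤ x ≤ y ≤ 2x we have f''(x)/2 ≤ f''(y) ≤ f''(x). Then for all x, y with 2x0 ≤ x ≤ y ≤ 2x we have f'(y) ≤ 3·f'(x). -/
import Mathlib


theorem stmt_3 (x0 : ℝ) (f f' f'' : ℝ → ℝ)
    (hx0 : 1 ≤ x0)
    (hd1 : ∀ x ∈ Set.Ici x0, HasDerivAt f (f' x) x)
    (hd2 : ∀ x ∈ Set.Ici x0, HasDerivAt f' (f'' x) x)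
    (hcont : ContinuousOn f'' (Set.Ici x0))
    (hpos : ∀ x ∈ Set.Ici x0, 0 < f x ∧ 0 < f' x ∧ 0 < f'' x)
    (hdbl : ∀ x y : ℝ, x0 ≤ x → x ≤ y → y ≤ 2 * x → f'' x / 2 ≤ f'' y ∧ f'' y ≤ f'' x) :
    ∀ x y : ℝ, 2 * x0 ≤ x → x ≤ y → y ≤ 2 * x → f' y ≤ 3 * f' x := by
  intro x y hx hxy hy2
  have hx0pos : (0:ℝ) < x0 := lt_of_lt_of_le one_pos hx0
  have hhalf : x0 ≤ x / 2 := by linarith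
  have hxI : x0 ≤ x := by linarith
  have hyI : x0 ≤ y := le_trans hxI hxy
  have hcf' : ContinuousOn f' (Set.Ici x0) := fun t ht =>
    (hd2 t ht).continuousAt.continuousWithinAt
  have hltx : x / 2 < x := by linarith
  -- step 1: x * f'' x ≤ 2 * f' x
  have key : x * f'' x ≤ 2 * f' x := by
    obtain ⟨c, hc, hceq⟩ := exists_hasDerivAt_eq_slope f' f'' hltx
      (hcf'.mono (by intro t ht; exact le_trans hhalf ht.1))
      (fun t ht => hd2 t (le_trans hhalf (le_of_lt ht.1)))
    have hcI : x0 ≤ c := le_trans hhalf hc.1.le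
    have hfx : f'' x ≤ f'' c := (hdbl c x hcI hc.2.le (by linarith [hc.1])).2
    have hpos2 : 0 < f' (x/2) := (hpos _ hhalf).2.1
    have : f'' c = (f' x - f' (x/2)) / (x - x/2) := hceq
    have hxx : x - x/2 = x/2 := by ring
    have hfcx : f'' c * (x/2) = f' x - f' (x/2) := by
      rw [this, hxx, div_mul_cancel₀]
      exact ne_of_gt (by linarith)
    nlinarith [hpos2, hc.1, hx0pos]
  rcases eq_or_lt_of_le hxy with rfl | hlt
  · have := (hpos x hxI).2.1; linarith
  -- step 2
  obtain ⟨d, hd, hdeq⟩ := exists_hasDerivAt_eq_slope f' f'' hlt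
    (hcf'.mono (by intro t ht; exact le_trans hxI ht.1))
    (fun t ht => hd2 t (le_trans hxI (le_of_lt ht.1)))
  have hdI : x0 ≤ d := le_trans hxI hd.1.le
  have hfd : f'' d ≤ f'' x := (hdbl x d hxI hd.1.le (by linarith [hd.2])).2
  have hfdy : f' y - f' x = f'' d * (y - x) := by
    rw [hdeq, div_mul_cancel₀]
    exact ne_of_gt (by linarith)
  have hf''x : 0 < f'' x := (hpos x hxI).2.2
  nlinarith [hd.1, hd.2, key]
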